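/- Let H be a real Hilbert space and L : H × H → ℝ ∪ {+∞} an anti-selfdual Lagrangian that is uniformly convex in both variables. Suppose u, x : [0,T] → H are continuous paths and v : [0,T] → H is a path such that −x(t) ∈ ∂₂L(u(t), v(t)) for almost every t ∈ [0,T]. Then there is a continuous path w : [0,T] → H with w(t) = v(t) for almost every t and −x(t) ∈ ∂₂L(u(t), w(t)) for every t ∈ [0,T]. -/

import Mathlib

open scoped RealInnerProductSpace NNReal

noncomputable section

/-- Convexity for `EReal`-valued functions. -/
def ERealConvexOn {E : Type*} [AddCommGroup E] [Module ℝ E] (f : E → EReal) : Prop :=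
  ∀ x y : E, ∀ s t : ℝ, 0 ≤ s → 0 ≤ t → s + t = 1 →
    f (s • x + t • y) ≤ (s : EReal) * f x + (t : EReal) * f y

/-- The Legendre–Fenchel dual, in both variables, of a Lagrangian on `H × H`. -/
def lagrangianDualH {H : Type*} [NormedAddCommGroup H] [InnerProductSpace ℝ H]
    (L : H × H → EReal) (q y : H) : EReal :=
  ⨆ x : H, ⨆ p : H, ((⟪q, x⟫ + ⟪y, p⟫ : ℝ) : EReal) - L (x, p)

/-- A Lagrangian on a Hilbert space is anti-selfdual if `L*(p,x) = L(−x,−p)`. -/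
def IsASDH {H : Type*} [NormedAddCommGroup H] [InnerProductSpace ℝ H]
    (L : H × H → EReal) : Prop :=
  ∀ p x : H, lagrangianDualH L p x = L (-x, -p)

/-- `(q,y) ∈ ∂L(x,p)`, the subdifferential of the Lagrangian `L` at `(x,p)`. -/
def MemSubdiff {H : Type*} [NormedAddCommGroup H] [InnerProductSpace ℝ H]
    (L : H × H → EReal) (x p q y : H) : Prop :=
  ∀ z r : H, L (x, p) + ((⟪q, z - x⟫ + ⟪y, r - p⟫ : ℝ) : EReal) ≤ L (z, r)

/-- `y ∈ ∂₂L(u,v)`, the subdifferential in the second variable. -/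
def MemSubdiff2 {H : Type*} [NormedAddCommGroup H] [InnerProductSpace ℝ H]
    (L : H × H → EReal) (u v y : H) : Prop :=
  ∀ r : H, L (u, v) + ((⟪y, r - v⟫ : ℝ) : EReal) ≤ L (u, r)

/-- `q ∈ ∂₁L(x,p)`, the subdifferential in the first variable. -/
def MemSubdiff1 {H : Type*} [NormedAddCommGroup H] [InnerProductSpace ℝ H]
    (L : H × H → EReal) (x p q : H) : Prop :=
  ∀ z : H, L (x, p) + ((⟪q, z - x⟫ : ℝ) : EReal) ≤ L (z, p)

/-- The `λ`-regularization of a Lagrangian: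
`L_λ(x,p) = inf_z { L(z,p) + ‖x−z‖²/(2λ) } + (λ/2)‖p‖²`. -/
def lagReg {H : Type*} [NormedAddCommGroup H] [InnerProductSpace ℝ H]
    (lam : ℝ) (L : H × H → EReal) (x p : H) : EReal :=
  (⨅ z : H, L (z, p) + ((‖x - z‖ ^ 2 / (2 * lam) : ℝ) : EReal))
    + ((lam / 2 * ‖p‖ ^ 2 : ℝ) : EReal)

open MeasureTheory Topology Filter

/-- Affine minorant for `z ↦ L z - c z` when it is convex and `L` is lsc proper. -/
lemma aux_minorant {E : Type*} [NormedAddCommGroup E] [NormedSpace ℝ E]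
    (L : E → EReal) (c : E → ℝ) (hc : Continuous c)
    (hlsc : LowerSemicontinuous L)
    (hproper : ∃ z, L z ≠ ⊤) (hreal : ∀ z, L z ≠ ⊥)
    (hconv : ∀ x y : E, ∀ s t : ℝ, 0 ≤ s → 0 ≤ t → s + t = 1 →
      L (s • x + t • y) - ((c (s • x + t • y) : ℝ) : EReal)
        ≤ (s : EReal) * (L x - ((c x : ℝ) : EReal)) + (t : EReal) * (L y - ((c y : ℝ) : EReal))) :
    ∃ (g : E →L[ℝ] ℝ) (u β : ℝ), 0 < β ∧
      ∀ z, (((u - g z) / β + c z : ℝ) : EReal) ≤ L z := by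
  classical
  set epi : Set (E × ℝ) := {p | L p.1 ≤ ((p.2 + c p.1 : ℝ) : EReal)} with hepidef
  have hopen : IsOpen {p : E × ℝ | ((p.2 + c p.1 : ℝ) : EReal) < L p.1} := by
    rw [isOpen_iff_mem_nhds]
    rintro ⟨z, r⟩ hp
    simp only [Set.mem_setOf_eq] at hp
    obtain ⟨y, hy1, hy2⟩ : ∃ y : ℝ, r + c z < y ∧ (y : EReal) < L z := by
      rcases eq_or_ne (L z) ⊤ with h | h
      · exact ⟨r + c z + 1, by linarith, h ▸ EReal.coe_lt_top _⟩
      · have hb := EReal.coe_toReal h (hreal z)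
        have hab : r + c z < (L z).toReal := by
          rw [← EReal.coe_lt_coe_iff, hb]; exact hp
        refine ⟨(r + c z + (L z).toReal) / 2, by linarith, ?_⟩
        conv_rhs => rw [← hb]
        rw [EReal.coe_lt_coe_iff]; linarith
    have h1 : ∀ᶠ p : E × ℝ in 𝓝 (z, r), (y : EReal) < L p.1 :=
      (continuous_fst.tendsto (z, r)).eventually (hlsc z (y : EReal) hy2)
    have h2 : ∀ᶠ p : E × ℝ in 𝓝 (z, r), p.2 + c p.1 < y := by
      have : IsOpen {p : E × ℝ | p.2 + c p.1 < y} :=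
        isOpen_lt (continuous_snd.add (hc.comp continuous_fst)) continuous_const
      have hmemzr : ((z, r) : E × ℝ) ∈ {p : E × ℝ | p.2 + c p.1 < y} := hy1
      exact this.mem_nhds hmemzr
    filter_upwards [h1, h2] with p hp1 hp2
    exact lt_trans (by exact_mod_cast hp2) hp1
  have hclosed : IsClosed epi := by
    have : epi = {p : E × ℝ | ((p.2 + c p.1 : ℝ) : EReal) < L p.1}ᶜ := by
      ext p; simp [hepidef, not_lt]
    rw [this]; exact hopen.isClosed_compl
  have hconvepi : Convex ℝ epi := by
    rintro ⟨z, r⟩ hz ⟨z', r'⟩ hz' s t hs ht hst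
    simp only [hepidef, Set.mem_setOf_eq] at hz hz' ⊢
    have hzT : L z ≠ ⊤ := ne_top_of_le_ne_top (EReal.coe_ne_top _) hz
    have hzT' : L z' ≠ ⊤ := ne_top_of_le_ne_top (EReal.coe_ne_top _) hz'
    set a := (L z).toReal with ha
    set a' := (L z').toReal with ha'
    have hLa : L z = (a : EReal) := (EReal.coe_toReal hzT (hreal z)).symm
    have hLa' : L z' = (a' : EReal) := (EReal.coe_toReal hzT' (hreal z')).symm
    have haler : a ≤ r + c z := by rw [← EReal.coe_le_coe_iff, ← hLa]; exact hz
    have haler' : a' ≤ r' + c z' := by rw [← EReal.coe_le_coe_iff, ← hLa']; exact hz'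
    have hkey := hconv z z' s t hs ht hst
    rw [hLa, hLa'] at hkey
    have hrw : (s : EReal) * ((a : EReal) - ((c z : ℝ) : EReal))
        + (t : EReal) * ((a' : EReal) - ((c z' : ℝ) : EReal))
        = ((s * (a - c z) + t * (a' - c z') : ℝ) : EReal) := by
      rw [← EReal.coe_sub, ← EReal.coe_sub, ← EReal.coe_mul, ← EReal.coe_mul, ← EReal.coe_add]
    rw [hrw] at hkey
    set m := s • z + t • z' with hm
    have hkey2 : L m ≤ ((s * (a - c z) + t * (a' - c z') + c m : ℝ) : EReal) := by
      rw [EReal.coe_add _ (c m)]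
      exact (EReal.sub_le_iff_le_add (Or.inl (EReal.coe_ne_bot _))
        (Or.inl (EReal.coe_ne_top _))).1 hkey
    have hfinal : s * (a - c z) + t * (a' - c z') + c m ≤ s * r + t * r' + c m := by
      have h1 : s * (a - c z) ≤ s * r := by nlinarith
      have h2 : t * (a' - c z') ≤ t * r' := by nlinarith
      linarith
    calc L ((s • (z, r) + t • (z', r')).1)
        = L m := by simp [hm, Prod.smul_def]
      _ ≤ ((s * (a - c z) + t * (a' - c z') + c m : ℝ) : EReal) := hkey2
      _ ≤ (((s • (z, r) + t • (z', r')).2 + c ((s • (z, r) + t • (z', r')).1) : ℝ) : EReal) := by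
          rw [EReal.coe_le_coe_iff]
          simp only [Prod.smul_def, Prod.fst_add, Prod.snd_add, Prod.smul_fst, Prod.smul_snd,
            smul_eq_mul]
          simpa [hm] using hfinal
  obtain ⟨z₀, hz₀⟩ := hproper
  set a₀ := (L z₀).toReal with ha₀
  have hLa₀ : L z₀ = (a₀ : EReal) := (EReal.coe_toReal hz₀ (hreal z₀)).symm
  have hp₀ : (z₀, a₀ - c z₀ - 1) ∉ epi := by
    simp only [hepidef, Set.mem_setOf_eq, not_le, hLa₀]
    rw [EReal.coe_lt_coe_iff]; linarith
  obtain ⟨f, u, hfu, hepi⟩ := geometric_hahn_banach_point_closed hconvepi hclosed hp₀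
  set g : E →L[ℝ] ℝ := f.comp (ContinuousLinearMap.inl ℝ E ℝ) with hg
  set β : ℝ := f (0, 1) with hβdef
  have hdecomp : ∀ (z : E) (r : ℝ), f (z, r) = g z + r * β := by
    intro z r
    have : ((z, r) : E × ℝ) = (z, 0) + r • ((0 : E), (1 : ℝ)) := by
      simp [Prod.ext_iff]
    rw [this, map_add, f.map_smul]
    simp [hg, hβdef, smul_eq_mul]
  have hmem₀ : (z₀, a₀ - c z₀) ∈ epi := by
    simp only [hepidef, Set.mem_setOf_eq, hLa₀, EReal.coe_le_coe_iff]
    linarith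
  have hβpos : 0 < β := by
    have h1 := hepi _ hmem₀
    rw [hdecomp] at h1 hfu
    nlinarith
  refine ⟨g, u, β, hβpos, fun z => ?_⟩
  rcases eq_or_ne (L z) ⊤ with h | h
  · rw [h]; exact le_top
  · set a := (L z).toReal with ha
    have hLa : L z = (a : EReal) := (EReal.coe_toReal h (hreal z)).symm
    have hmem : (z, a - c z) ∈ epi := by
      simp only [hepidef, Set.mem_setOf_eq, hLa, EReal.coe_le_coe_iff]; linarith
    have h1 := hepi _ hmem
    rw [hdecomp] at h1
    rw [hLa, EReal.coe_le_coe_iff]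
    have h2 : (u - g z) / β ≤ a - c z := by
      rw [div_le_iff₀ hβpos]; nlinarith
    linarith

/-- A continuous strongly convex bounded-below function on a complete normed space
has a unique minimizer. -/
lemma aux_min {H : Type*} [NormedAddCommGroup H] [NormedSpace ℝ H] [CompleteSpace H]
    (f : H → ℝ) (hcont : Continuous f) (ε : ℝ) (hε : 0 < ε)
    (hmid : ∀ a b : H, f ((1 / 2 : ℝ) • (a + b)) ≤ f a / 2 + f b / 2 - ε / 8 * ‖a - b‖ ^ 2)
    (hbdd : BddBelow (Set.range f)) :
    ∃ m : H, (∀ r, f m ≤ f r) ∧ ∀ m', (∀ r, f m' ≤ f r) → m' = m := by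
  classical
  set I : ℝ := ⨅ r, f r with hI
  have hIle : ∀ r, I ≤ f r := fun r => ciInf_le hbdd r
  have hseq : ∀ n : ℕ, ∃ zz : H, f zz < I + 1 / (n + 1) := by
    intro n
    apply exists_lt_of_ciInf_lt
    rw [← hI]
    exact lt_add_of_pos_right I (by positivity)
  choose z hz using hseq
  have hkey : ∀ n m N : ℕ, N ≤ n → N ≤ m →
      ‖z n - z m‖ ^ 2 ≤ 8 / ε * (1 / (N + 1)) := by
    intro n m N hn hm
    have h1 := hmid (z n) (z m)
    have h2 : I ≤ f ((1 / 2 : ℝ) • (z n + z m)) := hIle _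
    have h3 : f (z n) < I + 1 / (n + 1) := hz n
    have h4 : f (z m) < I + 1 / (m + 1) := hz m
    have h5 : (1 : ℝ) / (n + 1) ≤ 1 / (N + 1) := by
      apply one_div_le_one_div_of_le (by positivity)
      have : (N : ℝ) ≤ n := Nat.cast_le.2 hn
      linarith
    have h6 : (1 : ℝ) / (m + 1) ≤ 1 / (N + 1) := by
      apply one_div_le_one_div_of_le (by positivity)
      have : (N : ℝ) ≤ m := Nat.cast_le.2 hm
      linarith
    have h7 : ε / 8 * ‖z n - z m‖ ^ 2 ≤ 1 / (N + 1) := by linarith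
    have h8 : (8 / ε) * (ε / 8 * ‖z n - z m‖ ^ 2) ≤ (8 / ε) * (1 / (N + 1)) :=
      mul_le_mul_of_nonneg_left h7 (by positivity)
    have h9 : (8 / ε) * (ε / 8 * ‖z n - z m‖ ^ 2) = ‖z n - z m‖ ^ 2 := by
      field_simp
    linarith
  have hcauchy : CauchySeq z := by
    refine cauchySeq_of_le_tendsto_0 (fun N => Real.sqrt (8 / ε * (1 / (N + 1)))) ?_ ?_
    · intro n m N hn hm
      rw [dist_eq_norm]
      have hs : Real.sqrt (8 / ε * (1 / (N + 1))) ^ 2 = 8 / ε * (1 / (N + 1 : ℝ)) :=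
        Real.sq_sqrt (by positivity)
      have := hkey n m N hn hm
      nlinarith [norm_nonneg (z n - z m), Real.sqrt_nonneg (8 / ε * (1 / (N + 1 : ℝ)))]
    · have h0 : Filter.Tendsto (fun N : ℕ => 8 / ε * (1 / (N + 1 : ℝ))) Filter.atTop (nhds 0) := by
        have := tendsto_one_div_add_atTop_nhds_zero_nat (𝕜 := ℝ)
        have h := this.const_mul (8 / ε)
        simpa using h
      have := (Real.continuous_sqrt.tendsto 0).comp h0
      simpa [Function.comp_def] using this
  obtain ⟨m, hm⟩ := cauchySeq_tendsto_of_complete hcauchy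
  have hfm : f m ≤ I := by
    have h1 : Filter.Tendsto (fun n => f (z n)) Filter.atTop (nhds (f m)) :=
      (hcont.tendsto m).comp hm
    have h2 : Filter.Tendsto (fun n : ℕ => I + 1 / (n + 1 : ℝ)) Filter.atTop (nhds I) := by
      have := tendsto_one_div_add_atTop_nhds_zero_nat (𝕜 := ℝ)
      have h := (tendsto_const_nhds (x := I) (f := Filter.atTop (α := ℕ))).add this
      simpa using h
    exact le_of_tendsto_of_tendsto' h1 h2 fun n => (hz n).le
  have hmin : ∀ r, f m ≤ f r := fun r => hfm.trans (hIle r)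
  refine ⟨m, hmin, fun m' hmin' => ?_⟩
  have h1 := hmid m' m
  have h2 : f m ≤ f ((1 / 2 : ℝ) • (m' + m)) := hmin _
  have h3 : f m' ≤ f m := hmin' m
  have h4 : f m ≤ f m' := hmin m'
  have h5 : ε / 8 * ‖m' - m‖ ^ 2 ≤ 0 := by linarith
  have h6 : ‖m' - m‖ ^ 2 ≤ 0 := by nlinarith
  have h7 : ‖m' - m‖ = 0 := by nlinarith [norm_nonneg (m' - m), sq_nonneg ‖m' - m‖]
  rw [norm_eq_zero, sub_eq_zero] at h7
  exact h7

set_option maxHeartbeats 2000000 in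
/-- regularity of flows for an ASD Lagrangian uniformly convex in both
variables: an a.e. solution `v` of `−x(t) ∈ ∂₂L(u(t),v(t))` has a continuous version
solving the inclusion everywhere. -/
theorem stmt8 {H : Type*} [NormedAddCommGroup H] [InnerProductSpace ℝ H] [CompleteSpace H]
    (L : H × H → EReal)
    (hconv : ERealConvexOn L)
    (hlsc : LowerSemicontinuous L)
    (hproper : ∃ z, L z ≠ ⊤) (hreal : ∀ z, L z ≠ ⊥)
    (hASD : IsASDH L)
    (ε : ℝ) (hε : 0 < ε)
    (hunif : ERealConvexOn (fun zp : H × H =>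
      L zp - ((ε / 2 * (‖zp.1‖ ^ 2 + ‖zp.2‖ ^ 2) : ℝ) : EReal)))
    (T : ℝ) (hT : 0 < T)
    (u x v : ℝ → H)
    (hu : ContinuousOn u (Set.Icc 0 T))
    (hx : ContinuousOn x (Set.Icc 0 T))
    (hv : ∀ᵐ t ∂(volume.restrict (Set.Icc (0 : ℝ) T)),
      MemSubdiff2 L (u t) (v t) (-x t)) :
    ∃ w : ℝ → H,
      ContinuousOn w (Set.Icc 0 T) ∧
      (∀ᵐ t ∂(volume.restrict (Set.Icc (0 : ℝ) T)), w t = v t) ∧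
      (∀ t ∈ Set.Icc (0 : ℝ) T, MemSubdiff2 L (u t) (w t) (-x t)) := by
  classical
  -- Step 0: a quadratic helper inequality
  have hquad : ∀ cc tt : ℝ, 0 ≤ cc → 0 ≤ tt → cc * tt - ε / 2 * tt ^ 2 ≤ cc ^ 2 / (2 * ε) := by
    intro cc tt hcc htt
    have h : (cc * tt - ε / 2 * tt ^ 2) * (2 * ε) ≤ cc ^ 2 := by
      nlinarith [sq_nonneg (cc - ε * tt)]
    calc cc * tt - ε / 2 * tt ^ 2
        = ((cc * tt - ε / 2 * tt ^ 2) * (2 * ε)) / (2 * ε) := by field_simp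
      _ ≤ cc ^ 2 / (2 * ε) := (div_le_div_iff_of_pos_right (by positivity)).2 h
  -- Step 1: affine minorant of the strongly convex part
  obtain ⟨g, u₀, β, hβ, hmin⟩ :=
    aux_minorant L (fun z : H × H => ε / 2 * (‖z.1‖ ^ 2 + ‖z.2‖ ^ 2))
      (by fun_prop) hlsc hproper hreal
      (fun a b s t hs ht hst => hunif a b s t hs ht hst)
  set Gq : ℝ := ‖g‖ / β with hGqdef
  have hGq : 0 ≤ Gq := div_nonneg (norm_nonneg _) hβ.le
  have habs : ∀ p : H × H, |g p| ≤ ‖g‖ * (‖p.1‖ + ‖p.2‖) := by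
    intro p
    have h1 : ‖g p‖ ≤ ‖g‖ * ‖p‖ := g.le_opNorm p
    have h2 : ‖p‖ ≤ ‖p.1‖ + ‖p.2‖ := by
      rw [Prod.norm_def]
      exact max_le (by linarith [norm_nonneg p.2]) (by linarith [norm_nonneg p.1])
    calc |g p| = ‖g p‖ := (Real.norm_eq_abs _).symm
      _ ≤ ‖g‖ * ‖p‖ := h1
      _ ≤ ‖g‖ * (‖p.1‖ + ‖p.2‖) := by
          exact mul_le_mul_of_nonneg_left h2 (norm_nonneg _)
  -- Step 2: everywhere-finiteness of L via anti-selfduality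
  set UB : H × H → ℝ :=
    fun z => (‖z.2‖ + Gq) ^ 2 / (2 * ε) + (‖z.1‖ + Gq) ^ 2 / (2 * ε) - u₀ / β with hUBdef
  have hub : ∀ z : H × H, L z ≤ ((UB z : ℝ) : EReal) := by
    intro z
    have hz := hASD (-z.2) (-z.1)
    rw [neg_neg, neg_neg] at hz
    have hzz : L (z.1, z.2) = L z := by rw [Prod.mk.eta]
    rw [hzz] at hz
    rw [← hz, lagrangianDualH]
    refine iSup_le fun a => iSup_le fun b => ?_
    have h1 : (((⟪-z.2, a⟫ + ⟪-z.1, b⟫ : ℝ)) : EReal) - L (a, b)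
        ≤ ((((⟪-z.2, a⟫ + ⟪-z.1, b⟫)
            - ((u₀ - g (a, b)) / β + ε / 2 * (‖a‖ ^ 2 + ‖b‖ ^ 2)) : ℝ)) : EReal) := by
      rw [EReal.coe_sub]
      exact EReal.sub_le_sub le_rfl (hmin (a, b))
    refine h1.trans ?_
    rw [EReal.coe_le_coe_iff]
    have ha1 : ⟪-z.2, a⟫ ≤ ‖z.2‖ * ‖a‖ := by
      have := real_inner_le_norm (-z.2) a
      rwa [norm_neg] at this
    have hb1 : ⟪-z.1, b⟫ ≤ ‖z.1‖ * ‖b‖ := by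
      have := real_inner_le_norm (-z.1) b
      rwa [norm_neg] at this
    have hg1 : g (a, b) ≤ ‖g‖ * (‖a‖ + ‖b‖) := (abs_le.1 (habs (a, b))).2
    have hdiv : u₀ / β - Gq * (‖a‖ + ‖b‖) ≤ (u₀ - g (a, b)) / β := by
      have h2 : (u₀ - ‖g‖ * (‖a‖ + ‖b‖)) / β ≤ (u₀ - g (a, b)) / β :=
        (div_le_div_iff_of_pos_right hβ).2 (by linarith)
      have h3 : (u₀ - ‖g‖ * (‖a‖ + ‖b‖)) / β = u₀ / β - Gq * (‖a‖ + ‖b‖) := by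
        rw [hGqdef]; ring
      linarith
    have hq1 := hquad (‖z.2‖ + Gq) ‖a‖ (by positivity) (norm_nonneg a)
    have hq2 := hquad (‖z.1‖ + Gq) ‖b‖ (by positivity) (norm_nonneg b)
    rw [hUBdef]
    nlinarith [hq1, hq2, ha1, hb1, hdiv]
  have hTopf : ∀ z : H × H, L z ≠ ⊤ := fun z => ne_top_of_le_ne_top (EReal.coe_ne_top _) (hub z)
  set ℓ : H × H → ℝ := fun z => (L z).toReal with hℓdef
  have hLℓ : ∀ z : H × H, L z = ((ℓ z : ℝ) : EReal) :=
    fun z => (EReal.coe_toReal (hTopf z) (hreal z)).symm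
  have hupℝ : ∀ z : H × H, ℓ z ≤ UB z := by
    intro z
    rw [← EReal.coe_le_coe_iff, ← hLℓ]
    exact hub z
  have hlowℝ : ∀ z : H × H,
      (u₀ - g z) / β + ε / 2 * (‖z.1‖ ^ 2 + ‖z.2‖ ^ 2) ≤ ℓ z := by
    intro z
    rw [← EReal.coe_le_coe_iff, ← hLℓ]
    exact hmin z
  have hconvℝ : ∀ a b : H × H, ∀ s t : ℝ, 0 ≤ s → 0 ≤ t → s + t = 1 →
      ℓ (s • a + t • b) ≤ s * ℓ a + t * ℓ b := by
    intro a b s t hs ht hst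
    have h := hconv a b s t hs ht hst
    rw [hLℓ, hLℓ, hLℓ, ← EReal.coe_mul, ← EReal.coe_mul, ← EReal.coe_add,
      EReal.coe_le_coe_iff] at h
    exact h
  have hstrongℝ : ∀ a b : H × H, ∀ s t : ℝ, 0 ≤ s → 0 ≤ t → s + t = 1 →
      ℓ (s • a + t • b) - ε / 2 * (‖(s • a + t • b).1‖ ^ 2 + ‖(s • a + t • b).2‖ ^ 2)
        ≤ s * (ℓ a - ε / 2 * (‖a.1‖ ^ 2 + ‖a.2‖ ^ 2))
          + t * (ℓ b - ε / 2 * (‖b.1‖ ^ 2 + ‖b.2‖ ^ 2)) := by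
    intro a b s t hs ht hst
    have h := hunif a b s t hs ht hst
    simp only at h
    rw [hLℓ, hLℓ, hLℓ, ← EReal.coe_sub, ← EReal.coe_sub, ← EReal.coe_sub, ← EReal.coe_mul,
      ← EReal.coe_mul, ← EReal.coe_add, EReal.coe_le_coe_iff] at h
    exact h
  -- Step 3: ℓ is Lipschitz on balls, hence continuous
  have hconvOn : ∀ ρ : ℝ, ConvexOn ℝ (Metric.ball (0 : H × H) ρ) ℓ :=
    fun ρ => ⟨convex_ball _ _, fun a _ b _ s t hs ht hst => hconvℝ a b s t hs ht hst⟩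
  have hLip : ∀ ρ : ℝ, 0 < ρ → ∃ K : ℝ≥0, LipschitzOnWith K ℓ (Metric.ball (0 : H × H) ρ) := by
    intro ρ hρ
    set M : ℝ := max ((ρ + 1 + Gq) ^ 2 / (2 * ε) + (ρ + 1 + Gq) ^ 2 / (2 * ε) - u₀ / β)
      (-((u₀ - ‖g‖ * (2 * (ρ + 1))) / β)) with hMdef
    have hMl : (ρ + 1 + Gq) ^ 2 / (2 * ε) + (ρ + 1 + Gq) ^ 2 / (2 * ε) - u₀ / β ≤ M :=
      le_max_left _ _
    have hMr : -((u₀ - ‖g‖ * (2 * (ρ + 1))) / β) ≤ M := le_max_right _ _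
    clear_value M
    have hM : ∀ a : H × H, dist a 0 < ρ + 1 → |ℓ a| ≤ M := by
      intro a haball
      rw [dist_zero_right] at haball
      have h1 : ‖a.1‖ ≤ ρ + 1 := le_trans (norm_fst_le a) haball.le
      have h2 : ‖a.2‖ ≤ ρ + 1 := le_trans (norm_snd_le a) haball.le
      rw [abs_le]
      constructor
      · have h3 := hlowℝ a
        have h4 : g a ≤ ‖g‖ * (2 * (ρ + 1)) := by
          have h5 := (abs_le.1 (habs a)).2
          nlinarith [norm_nonneg g, norm_nonneg a.1, norm_nonneg a.2]
        have h5 : (u₀ - ‖g‖ * (2 * (ρ + 1))) / β ≤ (u₀ - g a) / β :=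
          (div_le_div_iff_of_pos_right hβ).2 (by linarith)
        have h6 : 0 ≤ ε / 2 * (‖a.1‖ ^ 2 + ‖a.2‖ ^ 2) := by positivity
        linarith [hMr]
      · have h3 := hupℝ a
        have e1 : (‖a.2‖ + Gq) ^ 2 / (2 * ε) ≤ (ρ + 1 + Gq) ^ 2 / (2 * ε) :=
          (div_le_div_iff_of_pos_right (by positivity)).2 (by nlinarith [norm_nonneg a.2])
        have e2 : (‖a.1‖ + Gq) ^ 2 / (2 * ε) ≤ (ρ + 1 + Gq) ^ 2 / (2 * ε) :=
          (div_le_div_iff_of_pos_right (by positivity)).2 (by nlinarith [norm_nonneg a.1])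
        have h4 : UB a ≤ (ρ + 1 + Gq) ^ 2 / (2 * ε) + (ρ + 1 + Gq) ^ 2 / (2 * ε) - u₀ / β := by
          rw [hUBdef]; dsimp only; linarith
        exact le_trans h3 (le_trans h4 hMl)
    have hlips := (hconvOn (ρ + 1)).lipschitzOnWith_of_abs_le one_pos hM
    refine ⟨(2 * M / 1).toNNReal, ?_⟩
    have he : ρ + 1 - 1 = ρ := by ring
    rwa [he] at hlips
  have hcontℓ : Continuous ℓ := by
    rw [continuous_iff_continuousAt]
    intro z
    obtain ⟨K, hK⟩ := hLip (‖z‖ + 1) (by positivity)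
    exact hK.continuousOn.continuousAt (Metric.isOpen_ball.mem_nhds
      (mem_ball_zero_iff.2 (by linarith)))
  -- Step 4: bounds on u and x over the interval
  obtain ⟨Ru', hRu'⟩ :=
    (isCompact_Icc : IsCompact (Set.Icc (0:ℝ) T)).exists_bound_of_continuousOn hu
  obtain ⟨Rx', hRx'⟩ :=
    (isCompact_Icc : IsCompact (Set.Icc (0:ℝ) T)).exists_bound_of_continuousOn hx
  set Ru : ℝ := max Ru' 0 with hRudef
  set Rx : ℝ := max Rx' 0 with hRxdef
  have hRu : ∀ t ∈ Set.Icc (0:ℝ) T, ‖u t‖ ≤ Ru := fun t ht => (hRu' t ht).trans (le_max_left _ _)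
  have hRx : ∀ t ∈ Set.Icc (0:ℝ) T, ‖x t‖ ≤ Rx := fun t ht => (hRx' t ht).trans (le_max_left _ _)
  have hRu0 : (0:ℝ) ≤ Ru := le_max_right _ _
  have hRx0 : (0:ℝ) ≤ Rx := le_max_right _ _
  -- Step 5: the strongly convex functionals
  set gfun : ℝ → H → ℝ := fun t r => ℓ (u t, r) + ⟪x t, r⟫ with hgfundef
  have hgcont : ∀ t, Continuous (gfun t) := by
    intro t
    apply Continuous.add
    · exact hcontℓ.comp (continuous_const.prodMk continuous_id)
    · exact continuous_const.inner continuous_id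
  have hmid2 : ∀ (y : H) (a b : H),
      ℓ (y, (1/2 : ℝ) • (a + b)) ≤ ℓ (y, a) / 2 + ℓ (y, b) / 2 - ε / 8 * ‖a - b‖ ^ 2 := by
    intro y a b
    have h := hstrongℝ (y, a) (y, b) (1/2) (1/2) (by norm_num) (by norm_num) (by norm_num)
    have hpt : ((1/2 : ℝ) • ((y, a) : H × H) + (1/2 : ℝ) • ((y, b) : H × H))
        = (y, (1/2 : ℝ) • (a + b)) := by
      rw [Prod.smul_mk, Prod.smul_mk, Prod.mk_add_mk, smul_add]
      congr 1
      rw [← add_smul]; norm_num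
    rw [hpt] at h
    dsimp only at h
    have hpar : ‖a + b‖ ^ 2 + ‖a - b‖ ^ 2 = 2 * ‖a‖ ^ 2 + 2 * ‖b‖ ^ 2 := by
      have h1 := norm_add_sq_real a b
      have h2 := norm_sub_sq_real a b
      linarith
    have hm : ‖(1/2 : ℝ) • (a + b)‖ ^ 2 = 1/4 * ‖a + b‖ ^ 2 := by
      rw [norm_smul]
      rw [Real.norm_eq_abs]
      rw [abs_of_nonneg (by norm_num : (0:ℝ) ≤ 1/2)]
      ring
    have e1 : ε / 2 * ‖(1/2 : ℝ) • (a + b)‖ ^ 2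
        = ε / 4 * ‖a‖ ^ 2 + ε / 4 * ‖b‖ ^ 2 - ε / 8 * ‖a - b‖ ^ 2 := by
      rw [hm]; linear_combination (ε / 8) * hpar
    linarith [h, e1]
  have hmidg : ∀ t : ℝ, ∀ a b : H,
      gfun t ((1/2 : ℝ) • (a + b)) ≤ gfun t a / 2 + gfun t b / 2 - ε / 8 * ‖a - b‖ ^ 2 := by
    intro t a b
    have h := hmid2 (u t) a b
    have hin : ⟪x t, (1/2 : ℝ) • (a + b)⟫ = ⟪x t, a⟫ / 2 + ⟪x t, b⟫ / 2 := by
      rw [real_inner_smul_right, inner_add_right]; ring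
    simp only [hgfundef]
    linarith [h, hin]
  have hlb : ∀ t ∈ Set.Icc (0:ℝ) T, ∀ r : H,
      u₀ / β - Gq * (Ru + ‖r‖) - Rx * ‖r‖ + ε / 2 * ‖r‖ ^ 2 ≤ gfun t r := by
    intro t ht r
    have h1 := hlowℝ (u t, r)
    dsimp only at h1
    have h2 : g (u t, r) ≤ ‖g‖ * (Ru + ‖r‖) := by
      have h3 := (abs_le.1 (habs (u t, r))).2
      dsimp only at h3
      have h4 := hRu t ht
      nlinarith [norm_nonneg g]
    have h4 : (u₀ - ‖g‖ * (Ru + ‖r‖)) / β ≤ (u₀ - g (u t, r)) / β :=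
      (div_le_div_iff_of_pos_right hβ).2 (by linarith)
    have h5 : (u₀ - ‖g‖ * (Ru + ‖r‖)) / β = u₀ / β - Gq * (Ru + ‖r‖) := by
      rw [hGqdef]; ring
    have h6 : -(Rx * ‖r‖) ≤ ⟪x t, r⟫ := by
      have h7 := (abs_le.1 (abs_real_inner_le_norm (x t) r)).1
      have h8 : ‖x t‖ * ‖r‖ ≤ Rx * ‖r‖ := mul_le_mul_of_nonneg_right (hRx t ht) (norm_nonneg r)
      linarith
    have h9 : 0 ≤ ε / 2 * ‖u t‖ ^ 2 := by positivity
    simp only [hgfundef]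
    linarith [h1, h4, h5, h6, h9]
  have hbddg : ∀ t ∈ Set.Icc (0:ℝ) T, BddBelow (Set.range (gfun t)) := by
    intro t ht
    refine ⟨u₀ / β - Gq * Ru - (Gq + Rx) ^ 2 / (2 * ε), ?_⟩
    rintro y ⟨r, rfl⟩
    have h1 := hlb t ht r
    have h2 := hquad (Gq + Rx) ‖r‖ (add_nonneg hGq hRx0) (norm_nonneg r)
    linarith
  -- Step 6: the minimizers
  have hex : ∀ t : ℝ, ∃ m : H, t ∈ Set.Icc (0:ℝ) T →
      (∀ r, gfun t m ≤ gfun t r) ∧ ∀ m', (∀ r, gfun t m' ≤ gfun t r) → m' = m := by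
    intro t
    by_cases ht : t ∈ Set.Icc (0:ℝ) T
    · obtain ⟨m, hm1, hm2⟩ := aux_min (gfun t) (hgcont t) ε hε (hmidg t) (hbddg t ht)
      exact ⟨m, fun _ => ⟨hm1, hm2⟩⟩
    · exact ⟨0, fun h => absurd h ht⟩
  choose w hw using hex
  clear_value Gq UB ℓ Ru Rx gfun
  -- Step 7: uniform bound on ‖w t‖
  set Mtop : ℝ := Gq ^ 2 / (2 * ε) + (Ru + Gq) ^ 2 / (2 * ε) - u₀ / β with hMtopdef
  set D0 : ℝ := Mtop - u₀ / β + Gq * Ru with hD0def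
  set c1 : ℝ := Gq + Rx with hc1def
  set R : ℝ := max 1 (2 / ε * (c1 + |D0|)) with hRdef
  have hR1 : (1:ℝ) ≤ R := le_max_left _ _
  have hR2 : 2 / ε * (c1 + |D0|) ≤ R := le_max_right _ _
  clear_value Mtop D0 c1 R
  have hR0 : (0:ℝ) ≤ R := by linarith
  have hwR : ∀ t ∈ Set.Icc (0:ℝ) T, ‖w t‖ ≤ R := by
    intro t ht
    have hup0 : gfun t 0 ≤ Mtop := by
      have h1 : gfun t 0 = ℓ (u t, 0) := by
        simp [hgfundef, inner_zero_right]
      have h2 := hupℝ (u t, 0)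
      have h3 : UB (u t, 0) ≤ Mtop := by
        rw [hUBdef, hMtopdef]
        dsimp only
        rw [norm_zero]
        have e2 : (‖u t‖ + Gq) ^ 2 / (2 * ε) ≤ (Ru + Gq) ^ 2 / (2 * ε) :=
          (div_le_div_iff_of_pos_right (by positivity)).2
            (by nlinarith [hRu t ht, norm_nonneg (u t), hGq])
        have e1 : ((0:ℝ) + Gq) ^ 2 / (2 * ε) = Gq ^ 2 / (2 * ε) := by ring
        linarith
      linarith [h2, h3, h1.le, h1.ge]
    have hlow0 := hlb t ht (w t)
    have hming := (hw t ht).1 0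
    have hXnn : 0 ≤ ‖w t‖ := norm_nonneg _
    have hkey : ε / 2 * ‖w t‖ ^ 2 ≤ c1 * ‖w t‖ + D0 := by
      rw [hc1def, hD0def]
      have hA : ε / 2 * ‖w t‖ ^ 2
          ≤ Mtop - u₀ / β + Gq * Ru + Gq * ‖w t‖ + Rx * ‖w t‖ := by
        have hB : gfun t (w t) ≤ Mtop := le_trans hming hup0
        linarith [hlow0, hB]
      linarith [hA]
    by_cases hcase : ‖w t‖ ≤ 1
    · exact hcase.trans hR1
    · push_neg at hcase
      have h2 : ε / 2 * ‖w t‖ ^ 2 ≤ (c1 + |D0|) * ‖w t‖ := by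
        nlinarith [le_abs_self D0, abs_nonneg D0]
      have h3 : ε / 2 * ‖w t‖ ≤ c1 + |D0| := by
        nlinarith [h2, hcase]
      have h4 : ‖w t‖ ≤ 2 / ε * (c1 + |D0|) := by
        have h5 : ‖w t‖ = 2 / ε * (ε / 2 * ‖w t‖) := by field_simp
        rw [h5]
        exact mul_le_mul_of_nonneg_left h3 (by positivity)
      exact h4.trans hR2
  -- Step 8: quantitative continuity estimate
  set ρ : ℝ := Ru + R + 1 with hρdef
  clear_value ρ
  have hρpos : 0 < ρ := by rw [hρdef]; linarith
  obtain ⟨K, hK⟩ := hLip ρ hρpos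
  have hmem : ∀ t ∈ Set.Icc (0:ℝ) T, ∀ r : H, ‖r‖ ≤ R →
      (u t, r) ∈ Metric.ball (0 : H × H) ρ := by
    intro t ht r hr
    rw [mem_ball_zero_iff, Prod.norm_def]
    have h1 := hRu t ht
    apply max_lt
    · dsimp only; rw [hρdef]; linarith
    · dsimp only; rw [hρdef]; linarith
  have hdiff : ∀ s ∈ Set.Icc (0:ℝ) T, ∀ t ∈ Set.Icc (0:ℝ) T, ∀ r : H, ‖r‖ ≤ R →
      gfun t r - gfun s r ≤ (K : ℝ) * ‖u t - u s‖ + R * ‖x t - x s‖ := by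
    intro s hs t ht r hr
    have h1 := hK.dist_le_mul (u t, r) (hmem t ht r hr) (u s, r) (hmem s hs r hr)
    rw [dist_prod_same_right, Real.dist_eq, dist_eq_norm] at h1
    have h6 := (abs_le.1 h1).2
    have h3 : ⟪x t, r⟫ - ⟪x s, r⟫ = ⟪x t - x s, r⟫ := (inner_sub_left _ _ _).symm
    have h4 : |⟪x t - x s, r⟫| ≤ ‖x t - x s‖ * ‖r‖ := abs_real_inner_le_norm _ _
    have h5 : ‖x t - x s‖ * ‖r‖ ≤ ‖x t - x s‖ * R :=
      mul_le_mul_of_nonneg_left hr (norm_nonneg _)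
    have h7 := (abs_le.1 h4).2
    simp only [hgfundef]
    nlinarith [h6, h7, h5, h3]
  have hwdist : ∀ t ∈ Set.Icc (0:ℝ) T, ∀ s ∈ Set.Icc (0:ℝ) T,
      ‖w s - w t‖ ^ 2 ≤ 8 / ε * ((K:ℝ) * ‖u s - u t‖ + R * ‖x s - x t‖) := by
    intro t ht s hs
    have hq := hmidg t (w s) (w t)
    have hge := (hw t ht).1 ((1/2:ℝ) • (w s + w t))
    have h1 : ε / 4 * ‖w s - w t‖ ^ 2 ≤ gfun t (w s) - gfun t (w t) := by linarith
    have h2 : gfun s (w s) ≤ gfun s (w t) := (hw s hs).1 (w t)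
    have h3 := hdiff s hs t ht (w s) (hwR s hs)
    have h4 := hdiff t ht s hs (w t) (hwR t ht)
    rw [norm_sub_rev (u t), norm_sub_rev (x t)] at h3
    have h6 : ε / 4 * ‖w s - w t‖ ^ 2 ≤ 2 * ((K:ℝ) * ‖u s - u t‖ + R * ‖x s - x t‖) := by
      linarith
    calc ‖w s - w t‖ ^ 2 = 4 / ε * (ε / 4 * ‖w s - w t‖ ^ 2) := by field_simp
      _ ≤ 4 / ε * (2 * ((K:ℝ) * ‖u s - u t‖ + R * ‖x s - x t‖)) :=
          mul_le_mul_of_nonneg_left h6 (by positivity)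
      _ = 8 / ε * ((K:ℝ) * ‖u s - u t‖ + R * ‖x s - x t‖) := by ring
  -- Step 9: continuity of w
  have hwcont : ContinuousOn w (Set.Icc (0:ℝ) T) := by
    intro t ht
    have hut : Filter.Tendsto u (𝓝[Set.Icc (0:ℝ) T] t) (𝓝 (u t)) := hu t ht
    have hxt : Filter.Tendsto x (𝓝[Set.Icc (0:ℝ) T] t) (𝓝 (x t)) := hx t ht
    have hun : Filter.Tendsto (fun s => ‖u s - u t‖) (𝓝[Set.Icc (0:ℝ) T] t) (𝓝 0) := by
      have := tendsto_iff_dist_tendsto_zero.1 hut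
      simpa [dist_eq_norm] using this
    have hxn : Filter.Tendsto (fun s => ‖x s - x t‖) (𝓝[Set.Icc (0:ℝ) T] t) (𝓝 0) := by
      have := tendsto_iff_dist_tendsto_zero.1 hxt
      simpa [dist_eq_norm] using this
    have hsum : Filter.Tendsto (fun s => 8 / ε * ((K:ℝ) * ‖u s - u t‖ + R * ‖x s - x t‖))
        (𝓝[Set.Icc (0:ℝ) T] t) (𝓝 0) := by
      have h := ((hun.const_mul (K:ℝ)).add (hxn.const_mul R)).const_mul (8/ε)
      simpa using h
    have hsqrt : Filter.Tendsto
        (fun s => Real.sqrt (8 / ε * ((K:ℝ) * ‖u s - u t‖ + R * ‖x s - x t‖)))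
        (𝓝[Set.Icc (0:ℝ) T] t) (𝓝 0) := by
      have := (Real.continuous_sqrt.tendsto 0).comp hsum
      simpa [Function.comp_def] using this
    have hdz : Filter.Tendsto (fun s => dist (w s) (w t)) (𝓝[Set.Icc (0:ℝ) T] t) (𝓝 0) := by
      apply squeeze_zero' (Filter.Eventually.of_forall fun s => dist_nonneg) ?_ hsqrt
      filter_upwards [self_mem_nhdsWithin] with s hs
      rw [dist_eq_norm]
      have hnn : 0 ≤ 8 / ε * ((K:ℝ) * ‖u s - u t‖ + R * ‖x s - x t‖) :=
        mul_nonneg (by positivity)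
          (add_nonneg (mul_nonneg K.2 (norm_nonneg _)) (mul_nonneg hR0 (norm_nonneg _)))
      exact (Real.le_sqrt (norm_nonneg _) hnn).2 (hwdist t ht s hs)
    exact tendsto_iff_dist_tendsto_zero.2 hdz
  -- Step 10: conclusion
  have hinner : ∀ t : ℝ, ∀ r q : H, ⟪-x t, r - q⟫ = ⟪x t, q⟫ - ⟪x t, r⟫ := by
    intro t r q
    rw [inner_neg_left, inner_sub_right]; ring
  have hae : ∀ᵐ t ∂(volume.restrict (Set.Icc (0:ℝ) T)), w t = v t := by
    filter_upwards [hv, ae_restrict_mem measurableSet_Icc] with t hvt ht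
    have hminv : ∀ r, gfun t (v t) ≤ gfun t r := by
      intro r
      have h := hvt r
      rw [hLℓ, hLℓ, ← EReal.coe_add, EReal.coe_le_coe_iff] at h
      have h2 := hinner t r (v t)
      simp only [hgfundef]
      linarith [h, h2]
    exact ((hw t ht).2 (v t) hminv).symm
  refine ⟨w, hwcont, hae, fun t ht r => ?_⟩
  rw [hLℓ, hLℓ, ← EReal.coe_add, EReal.coe_le_coe_iff]
  have h1 := (hw t ht).1 r
  simp only [hgfundef] at h1
  have h2 := hinner t r (w t)
  linarith
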